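/- Define fL : ℝ → ℝ by fL(x) = x for x > 0, fL(0) = 0, fL(x) = x for x < 0 rational, and fL(x) = 2x for x < 0 irrational; define fU : ℝ → ℝ by fU(x) = 2x for x > 0, fU(0) = 0, fU(x) = x for x < 0 rational, and fU(x) = 2x for x < 0 irrational. Then fL ≤ fU pointwise, the right-sided derivatives of fL and fU at 0 exist (equal to 1 and 2), but γL and γU are not left complementary at 0 (since min(γL(t), γU(t)) = max(γL(t), γU(t)) for t < 0 and this common value has both 1 and 2 as left cluster values), and the interval-valued function F(x) = [fL(x), fU(x)] is NOT gH-differentiable at 0: there exist no reals a ≤ b with min(γL(t), γU(t)) → a and max(γL(t), γU(t)) → b as t → 0 through t ≠ 0. -/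

import Mathlib

open Filter Topology

/-- The difference quotient `γ(t) = (f(x₀+t) − f(x₀))/t`. -/
noncomputable def gamma (f : ℝ → ℝ) (x₀ : ℝ) (t : ℝ) : ℝ :=
  (f (x₀ + t) - f x₀) / t

/-- The interval-valued function `F(x) = [fL(x), fU(x)]` is gH-differentiable at `x₀` with
gH-derivative `[a,b]` (`a ≤ b`) if `min(γL(t), γU(t)) → a` and `max(γL(t), γU(t)) → b`
as `t → 0` through `t ≠ 0`. -/
def gHDifferentiableAt (fL fU : ℝ → ℝ) (x₀ a b : ℝ) : Prop :=
  a ≤ b ∧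
  Tendsto (fun t => min (gamma fL x₀ t) (gamma fU x₀ t)) (𝓝[≠] (0 : ℝ)) (𝓝 a) ∧
  Tendsto (fun t => max (gamma fL x₀ t) (gamma fU x₀ t)) (𝓝[≠] (0 : ℝ)) (𝓝 b)

/-- `γL, γU` are left complementary at `0` with values `{kL, kU}`, `kL < kU`:
the sets of left cluster values of `γL` and `γU` at `0` both equal `{kL, kU}`, and
`min(γL(t), γU(t)) → kL`, `max(γL(t), γU(t)) → kU` as `t → 0⁻`. -/
def LeftComplementary (γL γU : ℝ → ℝ) (kL kU : ℝ) : Prop :=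
  kL < kU ∧
  {c : ℝ | MapClusterPt c (𝓝[<] (0 : ℝ)) γL} = {kL, kU} ∧
  {c : ℝ | MapClusterPt c (𝓝[<] (0 : ℝ)) γU} = {kL, kU} ∧
  Tendsto (fun t => min (γL t) (γU t)) (𝓝[<] (0 : ℝ)) (𝓝 kL) ∧
  Tendsto (fun t => max (γL t) (γU t)) (𝓝[<] (0 : ℝ)) (𝓝 kU)

/-- `γL, γU` are right complementary at `0` with values `{kL, kU}`, `kL < kU`. -/
def RightComplementary (γL γU : ℝ → ℝ) (kL kU : ℝ) : Prop :=
  kL < kU ∧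
  {c : ℝ | MapClusterPt c (𝓝[>] (0 : ℝ)) γL} = {kL, kU} ∧
  {c : ℝ | MapClusterPt c (𝓝[>] (0 : ℝ)) γU} = {kL, kU} ∧
  Tendsto (fun t => min (γL t) (γU t)) (𝓝[>] (0 : ℝ)) (𝓝 kL) ∧
  Tendsto (fun t => max (γL t) (γU t)) (𝓝[>] (0 : ℝ)) (𝓝 kU)

open Classical in
/-- `fL(x) = x` for `x > 0`, `fL(0) = 0`, `fL(x) = x` for `x < 0` rational,
`fL(x) = 2x` for `x < 0` irrational. -/
noncomputable def fL10 : ℝ → ℝ := fun x =>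
  if 0 < x then x else if x = 0 then 0 else if Irrational x then 2 * x else x

open Classical in
/-- `fU(x) = 2x` for `x > 0`, `fU(0) = 0`, `fU(x) = x` for `x < 0` rational,
`fU(x) = 2x` for `x < 0` irrational. -/
noncomputable def fU10 : ℝ → ℝ := fun x =>
  if 0 < x then 2 * x else if x = 0 then 0 else if Irrational x then 2 * x else x

lemma fL10_zero : fL10 0 = 0 := by norm_num [fL10]
lemma fU10_zero : fU10 0 = 0 := by norm_num [fU10]

lemma gL_pos {t : ℝ} (ht : 0 < t) : gamma fL10 0 t = 1 := by
  have hv : fL10 t = t := by simp only [fL10]; rw [if_pos ht]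
  unfold gamma; rw [zero_add, fL10_zero, hv, sub_zero, div_self ht.ne']

lemma gU_pos {t : ℝ} (ht : 0 < t) : gamma fU10 0 t = 2 := by
  have hv : fU10 t = 2 * t := by simp only [fU10]; rw [if_pos ht]
  unfold gamma
  rw [zero_add, fU10_zero, hv, sub_zero, mul_div_assoc, div_self ht.ne', mul_one]

lemma gL_neg_rat {t : ℝ} (ht : t < 0) (hr : ¬ Irrational t) : gamma fL10 0 t = 1 := by
  have hv : fL10 t = t := by
    simp only [fL10]; rw [if_neg (not_lt.2 ht.le), if_neg ht.ne, if_neg hr]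
  unfold gamma; rw [zero_add, fL10_zero, hv, sub_zero, div_self ht.ne]

lemma gU_neg_rat {t : ℝ} (ht : t < 0) (hr : ¬ Irrational t) : gamma fU10 0 t = 1 := by
  have hv : fU10 t = t := by
    simp only [fU10]; rw [if_neg (not_lt.2 ht.le), if_neg ht.ne, if_neg hr]
  unfold gamma; rw [zero_add, fU10_zero, hv, sub_zero, div_self ht.ne]

lemma gL_neg_irr {t : ℝ} (ht : t < 0) (hr : Irrational t) : gamma fL10 0 t = 2 := by
  have hv : fL10 t = 2 * t := by
    simp only [fL10]; rw [if_neg (not_lt.2 ht.le), if_neg ht.ne, if_pos hr]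
  unfold gamma
  rw [zero_add, fL10_zero, hv, sub_zero, mul_div_assoc, div_self ht.ne, mul_one]

lemma gU_neg_irr {t : ℝ} (ht : t < 0) (hr : Irrational t) : gamma fU10 0 t = 2 := by
  have hv : fU10 t = 2 * t := by
    simp only [fU10]; rw [if_neg (not_lt.2 ht.le), if_neg ht.ne, if_pos hr]
  unfold gamma
  rw [zero_add, fU10_zero, hv, sub_zero, mul_div_assoc, div_self ht.ne, mul_one]

lemma gLU_neg {t : ℝ} (ht : t < 0) : gamma fL10 0 t = gamma fU10 0 t := by
  by_cases hr : Irrational t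
  · rw [gL_neg_irr ht hr, gU_neg_irr ht hr]
  · rw [gL_neg_rat ht hr, gU_neg_rat ht hr]

lemma freq_rat : ∃ᶠ t in 𝓝[<] (0 : ℝ), t < 0 ∧ ¬ Irrational t := by
  rw [frequently_iff]
  intro U hU
  obtain ⟨a, ha, hsub⟩ := mem_nhdsLT_iff_exists_Ioo_subset.mp hU
  obtain ⟨q, hq1, hq2⟩ := exists_rat_btwn (show a < 0 from ha)
  exact ⟨q, hsub ⟨hq1, hq2⟩, hq2, Rat.not_irrational q⟩

lemma freq_irr : ∃ᶠ t in 𝓝[<] (0 : ℝ), t < 0 ∧ Irrational t := by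
  rw [frequently_iff]
  intro U hU
  obtain ⟨a, ha, hsub⟩ := mem_nhdsLT_iff_exists_Ioo_subset.mp hU
  obtain ⟨x, hx, hx1, hx2⟩ := exists_irrational_btwn (show a < 0 from ha)
  exact ⟨x, hsub ⟨hx1, hx2⟩, hx2, hx⟩

lemma cluster_unique {f : ℝ → ℝ} {l : Filter ℝ} {c a : ℝ}
    (hc : MapClusterPt c l f) (h : Tendsto f l (𝓝 a)) : c = a := by
  have : ClusterPt c (𝓝 a) := ClusterPt.mono hc h
  exact eq_of_nhds_neBot this

lemma min_cluster_one :
    MapClusterPt 1 (𝓝[<] (0 : ℝ)) (fun t => min (gamma fL10 0 t) (gamma fU10 0 t)) := by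
  rw [mapClusterPt_iff_frequently]
  intro s hs
  refine freq_rat.mono ?_
  rintro t ⟨ht, hr⟩
  have : min (gamma fL10 0 t) (gamma fU10 0 t) = 1 := by
    rw [gL_neg_rat ht hr, gU_neg_rat ht hr, min_self]
  rw [this]; exact mem_of_mem_nhds hs

lemma min_cluster_two :
    MapClusterPt 2 (𝓝[<] (0 : ℝ)) (fun t => min (gamma fL10 0 t) (gamma fU10 0 t)) := by
  rw [mapClusterPt_iff_frequently]
  intro s hs
  refine freq_irr.mono ?_
  rintro t ⟨ht, hr⟩
  have : min (gamma fL10 0 t) (gamma fU10 0 t) = 2 := by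
    rw [gL_neg_irr ht hr, gU_neg_irr ht hr, min_self]
  rw [this]; exact mem_of_mem_nhds hs

lemma left_le_ne : 𝓝[<] (0 : ℝ) ≤ 𝓝[≠] (0 : ℝ) :=
  nhdsWithin_mono 0 (fun x hx => ne_of_lt hx)

/-- Example: `fL ≤ fU` pointwise, the right-sided derivatives of `fL, fU` at `0` exist
(equal to `1, 2`), but `γL, γU` are not left complementary at `0` (for `t < 0` one has
`min(γL(t), γU(t)) = max(γL(t), γU(t))` and this common value has both `1` and `2` as
left cluster values), and `F = [fL, fU]` is NOT gH-differentiable at `0`. -/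
theorem gH_not_differentiable_not_left_complementary_example :
    (∀ x, fL10 x ≤ fU10 x) ∧
    Tendsto (gamma fL10 0) (𝓝[>] (0 : ℝ)) (𝓝 1) ∧
    Tendsto (gamma fU10 0) (𝓝[>] (0 : ℝ)) (𝓝 2) ∧
    (∀ t : ℝ, t < 0 → min (gamma fL10 0 t) (gamma fU10 0 t)
        = max (gamma fL10 0 t) (gamma fU10 0 t)) ∧
    MapClusterPt 1 (𝓝[<] (0 : ℝ)) (fun t => min (gamma fL10 0 t) (gamma fU10 0 t)) ∧
    MapClusterPt 2 (𝓝[<] (0 : ℝ)) (fun t => min (gamma fL10 0 t) (gamma fU10 0 t)) ∧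
    (∀ kL kU : ℝ, ¬ LeftComplementary (gamma fL10 0) (gamma fU10 0) kL kU) ∧
    (¬ ∃ a b : ℝ, gHDifferentiableAt fL10 fU10 0 a b) := by
  have hle : ∀ x, fL10 x ≤ fU10 x := by
    intro x
    unfold fL10 fU10
    rcases lt_trichotomy 0 x with h | h | h
    · rw [if_pos h, if_pos h]; linarith
    · simp [← h]
    · simp only [if_neg (not_lt.2 h.le), if_neg h.ne]
      exact le_refl _
  have hR1 : Tendsto (gamma fL10 0) (𝓝[>] (0 : ℝ)) (𝓝 1) := by
    refine tendsto_const_nhds.congr' ?_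
    filter_upwards [self_mem_nhdsWithin] with t ht
    exact (gL_pos ht).symm
  have hR2 : Tendsto (gamma fU10 0) (𝓝[>] (0 : ℝ)) (𝓝 2) := by
    refine tendsto_const_nhds.congr' ?_
    filter_upwards [self_mem_nhdsWithin] with t ht
    exact (gU_pos ht).symm
  have hmm : ∀ t : ℝ, t < 0 → min (gamma fL10 0 t) (gamma fU10 0 t)
      = max (gamma fL10 0 t) (gamma fU10 0 t) := by
    intro t ht; rw [gLU_neg ht, min_self, max_self]
  refine ⟨hle, hR1, hR2, hmm, min_cluster_one, min_cluster_two, ?_, ?_⟩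
  · rintro kL kU ⟨hlt, _, _, hmin, _⟩
    have h1 : (1 : ℝ) = kL := cluster_unique min_cluster_one hmin
    have h2 : (2 : ℝ) = kL := cluster_unique min_cluster_two hmin
    linarith
  · rintro ⟨a, b, _, hmin, _⟩
    have hmin' := hmin.mono_left left_le_ne
    have h1 : (1 : ℝ) = a := cluster_unique min_cluster_one hmin'
    have h2 : (2 : ℝ) = a := cluster_unique min_cluster_two hmin'
    linarith
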